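/- Consider the Sinkhorn–Knopp algorithm on a 2×2 nonnegative matrix with target marginals u = v = (1/2, 1/2). Suppose at an even step k the matrix has entries A^(k)_{11} = p, A^(k)_{12} = 1/2 − p, A^(k)_{21} = q, A^(k)_{22} = 1/2 − q with p, q ∈ [0, 1/2], p + q ≥ 1/2, and set Δ^(k) = 2(p+q) − 1 ∈ [0,1). Set s = p − q. Then after one column-normalization step and one row-normalization step, the marginal error satisfies A^(k+2)_{11} + A^(k+2)_{21} − 1/2 = 2s²Δ^(k) / ((1 − (Δ^(k))²)² − 4s²(Δ^(k))²), and hence Δ^(k+2) = 4s²Δ^(k) / ((1 − (Δ^(k))²)² − 4s²(Δ^(k))²). Moreover |s| ≤ (1 − Δ^(k))/2, which yields Δ^(k+2) ≤ Δ^(k) / (1 + 2Δ^(k)). -/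

import Mathlib

open Finset Matrix

/-- Row sum of a matrix. -/
def rsum {m n : ℕ} (A : Matrix (Fin m) (Fin n) ℝ) (i : Fin m) : ℝ := ∑ j, A i j

/-- Column sum of a matrix. -/
def csum {m n : ℕ} (A : Matrix (Fin m) (Fin n) ℝ) (j : Fin n) : ℝ := ∑ i, A i j

lemma aux_frac (a b c N0 N1 : ℝ) (h0 : N0 ≠ 0) (h1 : N1 ≠ 0)
    (h : (a * N1 + b * N0) * 8 - 8 * (N0 * N1) = c) :
    a / (2 * N0) + b / (2 * N1) - 1 / 2 = c / (16 * N0 * N1) := by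
  subst h
  field_simp
  ring

theorem stmt13 (p q : ℝ)
    (hp : p ∈ Set.Icc (0 : ℝ) (1 / 2)) (hq : q ∈ Set.Icc (0 : ℝ) (1 / 2))
    (hpq : 1 / 2 ≤ p + q) (hpq1 : p + q < 1)
    (Δ s : ℝ) (hΔ : Δ = 2 * (p + q) - 1) (hs : s = p - q)
    -- the matrix at the even step k
    (A0 : Matrix (Fin 2) (Fin 2) ℝ)
    (hA0 : A0 = !![p, 1 / 2 - p; q, 1 / 2 - q])
    -- one column-normalization step (columns scaled to sum 1/2)
    (A1 : Matrix (Fin 2) (Fin 2) ℝ)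
    (hA1 : ∀ i j, A1 i j = (1 / 2) * A0 i j / csum A0 j)
    (hA1pos : ∀ i, 0 < rsum A1 i)
    -- one row-normalization step (rows scaled to sum 1/2)
    (A2 : Matrix (Fin 2) (Fin 2) ℝ)
    (hA2 : ∀ i j, A2 i j = (1 / 2) * A1 i j / rsum A1 i) :
    A2 0 0 + A2 1 0 - 1 / 2 =
      2 * s ^ 2 * Δ / ((1 - Δ ^ 2) ^ 2 - 4 * s ^ 2 * Δ ^ 2) ∧
    (∑ i, |rsum A2 i - 1 / 2|) + (∑ j, |csum A2 j - 1 / 2|) =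
      4 * s ^ 2 * Δ / ((1 - Δ ^ 2) ^ 2 - 4 * s ^ 2 * Δ ^ 2) ∧
    |s| ≤ (1 - Δ) / 2 ∧
    (∑ i, |rsum A2 i - 1 / 2|) + (∑ j, |csum A2 j - 1 / 2|) ≤ Δ / (1 + 2 * Δ) := by
  obtain ⟨hp0, hp1⟩ := hp
  obtain ⟨hq0, hq1⟩ := hq
  subst hΔ hs
  -- column sums of A0
  have hc0 : csum A0 0 = p + q := by
    simp [csum, hA0, Fin.sum_univ_two]
  have hc1 : csum A0 1 = 1 - (p + q) := by
    simp [csum, hA0, Fin.sum_univ_two]; ring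
  have hcpos : 0 < p + q := by linarith
  have hdpos : 0 < 1 - (p + q) := by linarith
  -- entries of A1
  have a100 : A1 0 0 = 1 / 2 * p / (p + q) := by
    rw [hA1, hc0, hA0]; simp
  have a110 : A1 1 0 = 1 / 2 * q / (p + q) := by
    rw [hA1, hc0, hA0]; simp
  have a101 : A1 0 1 = 1 / 2 * (1 / 2 - p) / (1 - (p + q)) := by
    rw [hA1, hc1, hA0]; simp
  have a111 : A1 1 1 = 1 / 2 * (1 / 2 - q) / (1 - (p + q)) := by
    rw [hA1, hc1, hA0]; simp
  -- row sums of A1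
  have hr0 : rsum A1 0 = (p + (p + q) / 2 - 2 * p * (p + q)) /
      (2 * (p + q) * (1 - (p + q))) := by
    simp only [rsum, Fin.sum_univ_two, a100, a101]
    field_simp
    ring
  have hr1 : rsum A1 1 = (q + (p + q) / 2 - 2 * q * (p + q)) /
      (2 * (p + q) * (1 - (p + q))) := by
    simp only [rsum, Fin.sum_univ_two, a110, a111]
    field_simp
    ring
  have hden : 0 < 2 * (p + q) * (1 - (p + q)) := by positivity
  have hN0 : 0 < p + (p + q) / 2 - 2 * p * (p + q) := by
    have h := hA1pos 0
    rw [hr0] at h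
    rcases div_pos_iff.mp h with ⟨h1, _⟩ | ⟨_, h2⟩
    · exact h1
    · linarith
  have hN1 : 0 < q + (p + q) / 2 - 2 * q * (p + q) := by
    have h := hA1pos 1
    rw [hr1] at h
    rcases div_pos_iff.mp h with ⟨h1, _⟩ | ⟨_, h2⟩
    · exact h1
    · linarith
  have hN0' := hN0.ne'
  have hN1' := hN1.ne'
  -- entries of A2
  have h2N0 : (2 : ℝ) * (p + (p + q) / 2 - 2 * p * (p + q)) ≠ 0 := by positivity
  have h2N1 : (2 : ℝ) * (q + (p + q) / 2 - 2 * q * (p + q)) ≠ 0 := by positivity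
  have a200 : A2 0 0 = p * (1 - (p + q)) / (2 * (p + (p + q) / 2 - 2 * p * (p + q))) := by
    rw [hA2, a100, hr0, div_div_eq_mul_div, div_eq_div_iff hN0' h2N0]
    field_simp
  have a210 : A2 1 0 = q * (1 - (p + q)) / (2 * (q + (p + q) / 2 - 2 * q * (p + q))) := by
    rw [hA2, a110, hr1, div_div_eq_mul_div, div_eq_div_iff hN1' h2N1]
    field_simp
  have a201 : A2 0 1 = (1 / 2 - p) * (p + q) / (2 * (p + (p + q) / 2 - 2 * p * (p + q))) := by
    rw [hA2, a101, hr0, div_div_eq_mul_div, div_eq_div_iff hN0' h2N0]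
    field_simp
  have a211 : A2 1 1 = (1 / 2 - q) * (p + q) / (2 * (q + (p + q) / 2 - 2 * q * (p + q))) := by
    rw [hA2, a111, hr1, div_div_eq_mul_div, div_eq_div_iff hN1' h2N1]
    field_simp
  -- the big denominator
  have hDeq : (1 - (2 * (p + q) - 1) ^ 2) ^ 2 - 4 * (p - q) ^ 2 * (2 * (p + q) - 1) ^ 2
      = 16 * (p + (p + q) / 2 - 2 * p * (p + q)) * (q + (p + q) / 2 - 2 * q * (p + q)) := by
    ring
  have hDpos : 0 < (1 - (2 * (p + q) - 1) ^ 2) ^ 2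
      - 4 * (p - q) ^ 2 * (2 * (p + q) - 1) ^ 2 := by
    rw [hDeq]; positivity
  have hΔ0 : (0 : ℝ) ≤ 2 * (p + q) - 1 := by linarith
  -- Goal 1
  have goal1 : A2 0 0 + A2 1 0 - 1 / 2 =
      2 * (p - q) ^ 2 * (2 * (p + q) - 1) /
      ((1 - (2 * (p + q) - 1) ^ 2) ^ 2 - 4 * (p - q) ^ 2 * (2 * (p + q) - 1) ^ 2) := by
    rw [a200, a210, hDeq]
    exact aux_frac _ _ _ _ _ hN0' hN1' (by ring)
  refine ⟨goal1, ?_, ?_, ?_⟩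
  · -- row sums of A2 are exactly 1/2
    have hrs : ∀ i, rsum A2 i = 1 / 2 := by
      intro i
      have h := (hA1pos i).ne'
      simp only [rsum, Fin.sum_univ_two, hA2] at h ⊢
      rw [← add_div, ← mul_add, mul_div_assoc, div_self h, mul_one]
    have hcs0 : csum A2 0 - 1 / 2 =
        2 * (p - q) ^ 2 * (2 * (p + q) - 1) /
        ((1 - (2 * (p + q) - 1) ^ 2) ^ 2 - 4 * (p - q) ^ 2 * (2 * (p + q) - 1) ^ 2) := by
      rw [← goal1]; simp [csum, Fin.sum_univ_two]
    have hcs1 : csum A2 1 - 1 / 2 =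
        -(2 * (p - q) ^ 2 * (2 * (p + q) - 1)) /
        ((1 - (2 * (p + q) - 1) ^ 2) ^ 2 - 4 * (p - q) ^ 2 * (2 * (p + q) - 1) ^ 2) := by
      simp only [csum, Fin.sum_univ_two]
      rw [a201, a211, hDeq]
      exact aux_frac _ _ _ _ _ hN0' hN1' (by ring)
    have hxnn : 0 ≤ 2 * (p - q) ^ 2 * (2 * (p + q) - 1) /
        ((1 - (2 * (p + q) - 1) ^ 2) ^ 2 - 4 * (p - q) ^ 2 * (2 * (p + q) - 1) ^ 2) := by
      apply div_nonneg _ hDpos.le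
      positivity
    rw [Fin.sum_univ_two, Fin.sum_univ_two, hrs 0, hrs 1, hcs0, hcs1]
    rw [abs_of_nonneg hxnn, neg_div, abs_neg, abs_of_nonneg hxnn]
    simp only [sub_self, abs_zero]
    ring
  · -- |s| ≤ (1-Δ)/2
    rw [abs_le]
    constructor <;> linarith
  · -- final inequality
    have hrs : ∀ i, rsum A2 i = 1 / 2 := by
      intro i
      have h := (hA1pos i).ne'
      simp only [rsum, Fin.sum_univ_two, hA2] at h ⊢
      rw [← add_div, ← mul_add, mul_div_assoc, div_self h, mul_one]
    have hcs0 : csum A2 0 - 1 / 2 =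
        2 * (p - q) ^ 2 * (2 * (p + q) - 1) /
        ((1 - (2 * (p + q) - 1) ^ 2) ^ 2 - 4 * (p - q) ^ 2 * (2 * (p + q) - 1) ^ 2) := by
      rw [← goal1]; simp [csum, Fin.sum_univ_two]
    have hcs1 : csum A2 1 - 1 / 2 =
        -(2 * (p - q) ^ 2 * (2 * (p + q) - 1)) /
        ((1 - (2 * (p + q) - 1) ^ 2) ^ 2 - 4 * (p - q) ^ 2 * (2 * (p + q) - 1) ^ 2) := by
      simp only [csum, Fin.sum_univ_two]
      rw [a201, a211, hDeq]
      exact aux_frac _ _ _ _ _ hN0' hN1' (by ring)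
    have hxnn : 0 ≤ 2 * (p - q) ^ 2 * (2 * (p + q) - 1) /
        ((1 - (2 * (p + q) - 1) ^ 2) ^ 2 - 4 * (p - q) ^ 2 * (2 * (p + q) - 1) ^ 2) := by
      apply div_nonneg _ hDpos.le
      positivity
    rw [Fin.sum_univ_two, Fin.sum_univ_two, hrs 0, hrs 1, hcs0, hcs1]
    rw [abs_of_nonneg hxnn, neg_div, abs_neg, abs_of_nonneg hxnn]
    simp only [sub_self, abs_zero]
    have h2 : 0 < 1 + 2 * (2 * (p + q) - 1) := by linarith
    have key : (0 : ℝ) + 0 + (2 * (p - q) ^ 2 * (2 * (p + q) - 1) /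
        ((1 - (2 * (p + q) - 1) ^ 2) ^ 2 - 4 * (p - q) ^ 2 * (2 * (p + q) - 1) ^ 2) +
        2 * (p - q) ^ 2 * (2 * (p + q) - 1) /
        ((1 - (2 * (p + q) - 1) ^ 2) ^ 2 - 4 * (p - q) ^ 2 * (2 * (p + q) - 1) ^ 2)) =
        4 * (p - q) ^ 2 * (2 * (p + q) - 1) /
        ((1 - (2 * (p + q) - 1) ^ 2) ^ 2 - 4 * (p - q) ^ 2 * (2 * (p + q) - 1) ^ 2) := by
      ring
    rw [key, div_le_div_iff₀ hDpos h2]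
    clear hrs hcs0 hcs1 hxnn key goal1 a200 a210 a201 a211 a100 a110 a101 a111
      hr0 hr1 hA0 hA1 hA2 hA1pos hc0 hc1 hDeq hDpos h2N0 h2N1 hN0' hN1' hN0 hN1
      hden hcpos hdpos A0 A1 A2
    have h1p : (0 : ℝ) ≤ 1 - 2 * p := by linarith
    have h1q : (0 : ℝ) ≤ 1 - 2 * q := by linarith
    have hint := mul_nonneg (mul_nonneg hΔ0 (sq_nonneg (2 * (p + q)))) (mul_nonneg h1p h1q)
    nlinarith [hint]
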